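/- Let (Ω, F, (F_t)_{t≥0}) be a filtered measurable space, let H₁ and H₂ be separable real Hilbert spaces with an injective continuous linear embedding ι : H₁ → H₂, and suppose there exists a sequence (h_k)_{k∈ℕ} of continuous linear functionals on H₂ such that ‖f‖_{H₁} = sup_{k∈ℕ} h_k(ι f) for every f ∈ H₁. Let X be an (F_t)_{t≥0}-adapted process with trajectories in C([0,∞), H₂), let α ∈ (0,1), and for x ∈ H₂ set N(x) := sup_{k∈ℕ} h_k(x) ∈ [−∞, +∞]. Define, for t ≥ 0, the pathwise Hölder quantity H_t := sup_{s∈[0,t]} N(X_s) + sup_{0≤s<s'≤t} N(X_{s'} − X_s)/(s' − s)^α ∈ [−∞, +∞]. Then for every L > 1 the random time τ₂ := inf{ t ≥ 0 : H_t > L } (with inf ∅ := +∞) is a stopping time with respect to the right-continuous filtration (F_t^+)_{t≥0}, where F_t^+ := ⋂_{s>t} F_s. -/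

import Mathlib

open MeasureTheory Filter
open scoped ENNReal NNReal

private lemma aux_iSup_mul (b : ℕ → ℝ) {c : ℝ} (hc : 0 < c) :
    (⨆ k, ((b k : ℝ) : EReal)) * (c : EReal) = ⨆ k, (((b k * c) : ℝ) : EReal) := by
  have hc0 : (0 : EReal) < (c : EReal) := by exact_mod_cast hc
  have hcT : (c : EReal) ≠ ⊤ := EReal.coe_ne_top c
  have key : ∀ x y : EReal, x * (c : EReal) ≤ y ↔ x ≤ y / (c : EReal) := fun x y =>
    (EReal.le_div_iff_mul_le hc0 hcT).symm
  have cancel : ∀ y : EReal, (y * (c : EReal)) / (c : EReal) = y := by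
    intro y
    rw [← EReal.mul_div y (c : EReal) (c : EReal),
      EReal.div_self (EReal.coe_ne_bot c) hcT (by exact_mod_cast hc.ne'), mul_one]
  apply le_antisymm
  · rw [key]
    refine iSup_le fun k => ?_
    rw [← key, ← EReal.coe_mul]
    exact le_iSup (fun k => (((b k * c) : ℝ) : EReal)) k
  · refine iSup_le fun k => ?_
    rw [EReal.coe_mul, key, cancel]
    exact le_iSup (fun k => ((b k : ℝ) : EReal)) k

private lemma aux_lt_add_iff {A B : EReal} {L : ℝ} :
    (L : EReal) < A + B ↔ ∃ q : ℚ, ((q : ℝ) : EReal) < A ∧ ((L - q : ℝ) : EReal) < B := by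
  constructor
  · intro hlt
    induction A using EReal.rec with
    | bot => rw [EReal.bot_add] at hlt; exact absurd hlt (by simp)
    | top =>
      induction B using EReal.rec with
      | bot => rw [EReal.add_bot] at hlt; exact absurd hlt (by simp)
      | coe b =>
        obtain ⟨q, hq⟩ := exists_rat_gt (L - b)
        exact ⟨q, by simp, by exact_mod_cast (by linarith : L - (q : ℝ) < b)⟩
      | top => exact ⟨0, by simp, EReal.coe_lt_top _⟩
    | coe a =>
      induction B using EReal.rec with
      | bot => rw [EReal.add_bot] at hlt; exact absurd hlt (by simp)
      | coe b =>
        have hab : L < a + b := by exact_mod_cast hlt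
        obtain ⟨q, hq1, hq2⟩ := exists_rat_btwn (by linarith : L - b < a)
        exact ⟨q, by exact_mod_cast hq2, by exact_mod_cast (by linarith : L - (q : ℝ) < b)⟩
      | top =>
        obtain ⟨q, hq⟩ := exists_rat_lt a
        exact ⟨q, by exact_mod_cast hq, EReal.coe_lt_top _⟩
  · rintro ⟨q, hq1, hq2⟩
    have hL : ((L : ℝ) : EReal) = ((q : ℝ) : EReal) + ((L - q : ℝ) : EReal) := by
      rw [← EReal.coe_add]; norm_num
    rw [hL]
    exact EReal.add_lt_add hq1 hq2
theorem stmt_1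
    {Ω : Type*} {mΩ : MeasurableSpace Ω} (F : Filtration ℝ≥0 mΩ)
    {H₁ H₂ : Type*}
    [NormedAddCommGroup H₁] [InnerProductSpace ℝ H₁] [CompleteSpace H₁]
    [TopologicalSpace.SeparableSpace H₁]
    [NormedAddCommGroup H₂] [InnerProductSpace ℝ H₂] [CompleteSpace H₂]
    [TopologicalSpace.SeparableSpace H₂]
    [MeasurableSpace H₂] [BorelSpace H₂]
    (ι : H₁ →L[ℝ] H₂) (hι : Function.Injective ι)
    (h : ℕ → (H₂ →L[ℝ] ℝ))
    (hnorm : ∀ f : H₁, (‖f‖ : EReal) = ⨆ k : ℕ, ((h k (ι f) : ℝ) : EReal))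
    (X : ℝ≥0 → Ω → H₂)
    (hadapted : ∀ t : ℝ≥0, Measurable[F t] (X t))
    (hcont : ∀ ω : Ω, Continuous fun t : ℝ≥0 => X t ω)
    (α : ℝ) (hα : α ∈ Set.Ioo (0 : ℝ) 1)
    (L : ℝ) (hL : 1 < L)
    (N : H₂ → EReal) (hN : ∀ x : H₂, N x = ⨆ k : ℕ, ((h k x : ℝ) : EReal))
    (Hol : ℝ≥0 → Ω → EReal)
    (hHol : ∀ (t : ℝ≥0) (ω : Ω), Hol t ω =
      (⨆ s ∈ Set.Icc (0 : ℝ≥0) t, N (X s ω)) +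
        ⨆ (s : ℝ≥0) (s' : ℝ≥0) (_ : s < s') (_ : s' ≤ t),
          N (X s' ω - X s ω) * (((((s' : ℝ) - (s : ℝ)) ^ α)⁻¹ : ℝ) : EReal))
    (τ : Ω → ℝ≥0∞)
    (hτ : ∀ ω : Ω, τ ω = ⨅ t ∈ {t : ℝ≥0 | (L : EReal) < Hol t ω}, (t : ℝ≥0∞)) :
    ∀ t : ℝ≥0, MeasurableSet[⨅ s ∈ Set.Ioi t, F s] {ω : Ω | τ ω ≤ (t : ℝ≥0∞)} := by
  classical
  haveI : SecondCountableTopology H₂ := UniformSpace.secondCountable_of_separable H₂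
  set d : ℕ → ℝ≥0 := TopologicalSpace.denseSeq ℝ≥0 with hd
  have hdd : DenseRange d := TopologicalSpace.denseRange_denseSeq ℝ≥0
  -- positivity of the Hölder weight
  have hsubpos : ∀ {s s' : ℝ≥0}, s < s' → (0 : ℝ) < (s' : ℝ) - (s : ℝ) := by
    intro s s' hss'
    have := NNReal.coe_lt_coe.2 hss'
    linarith
  have hcstpos : ∀ {s s' : ℝ≥0}, s < s' → (0 : ℝ) < ((((s' : ℝ) - (s : ℝ)) ^ α)⁻¹ : ℝ) :=
    fun {s s'} hss' => inv_pos.2 (Real.rpow_pos_of_pos (hsubpos hss') α)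
  -- the k-indexed form of the Hölder increment
  set G : Ω → ℝ≥0 → ℝ≥0 → EReal := fun ω s s' =>
    ⨆ k, (((h k (X s' ω - X s ω) * ((((s' : ℝ) - (s : ℝ)) ^ α)⁻¹ : ℝ)) : ℝ) : EReal) with hGdef
  have hgG : ∀ (ω : Ω) (s s' : ℝ≥0), s < s' →
      N (X s' ω - X s ω) * (((((s' : ℝ) - (s : ℝ)) ^ α)⁻¹ : ℝ) : EReal) = G ω s s' := by
    intro ω s s' hss'
    rw [hGdef, hN]
    exact aux_iSup_mul _ (hcstpos hss')
  -- rewrite the second supremum through G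
  have hBraw : ∀ (u : ℝ≥0) (ω : Ω),
      (⨆ (s : ℝ≥0) (s' : ℝ≥0) (_ : s < s') (_ : s' ≤ u),
        N (X s' ω - X s ω) * (((((s' : ℝ) - (s : ℝ)) ^ α)⁻¹ : ℝ) : EReal))
        = ⨆ (s : ℝ≥0) (s' : ℝ≥0) (_ : s < s') (_ : s' ≤ u), G ω s s' := by
    intro u ω
    exact iSup_congr fun s => iSup_congr fun s' => iSup_congr fun hss' =>
      iSup_congr fun _ => hgG ω s s' hss'
  -- countable representation of the first supremum
  have hA : ∀ (u : ℝ≥0) (ω : Ω),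
      (⨆ s ∈ Set.Icc (0 : ℝ≥0) u, N (X s ω))
        = max (N (X u ω)) (⨆ n, ⨆ (_ : d n ≤ u), N (X (d n) ω)) := by
    intro u ω
    apply le_antisymm
    · refine iSup₂_le fun s hs => ?_
      rcases eq_or_lt_of_le hs.2 with rfl | hsu
      · exact le_max_left _ _
      · refine le_of_forall_lt fun c hc => ?_
        rw [hN] at hc
        obtain ⟨k, hk⟩ := lt_iSup_iff.mp hc
        have hopen : IsOpen ({x : ℝ≥0 | c < ((h k (X x ω) : ℝ) : EReal)} ∩ Set.Iio u) := by
          refine IsOpen.inter ?_ isOpen_Iio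
          exact isOpen_lt continuous_const
            (continuous_coe_real_ereal.comp ((h k).continuous.comp (hcont ω)))
        obtain ⟨n, hn1, hn2⟩ := hdd.exists_mem_open hopen ⟨s, hk, hsu⟩
        have hstep : ((h k (X (d n) ω) : ℝ) : EReal) ≤ N (X (d n) ω) := by
          rw [hN]
          exact le_iSup (fun k => ((h k (X (d n) ω) : ℝ) : EReal)) k
        have h2 : N (X (d n) ω) ≤ ⨆ n, ⨆ (_ : d n ≤ u), N (X (d n) ω) :=
          le_iSup₂ (f := fun n (_ : d n ≤ u) => N (X (d n) ω)) n hn2.le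
        exact lt_of_lt_of_le hn1 ((hstep.trans h2).trans (le_max_right _ _))
    · refine max_le ?_ ?_
      · exact le_iSup₂ (f := fun s (_ : s ∈ Set.Icc (0 : ℝ≥0) u) => N (X s ω)) u
          ⟨zero_le, le_refl u⟩
      · exact iSup₂_le fun n hn =>
          le_iSup₂ (f := fun s (_ : s ∈ Set.Icc (0 : ℝ≥0) u) => N (X s ω)) (d n)
            ⟨zero_le, hn⟩
  -- countable representation of the second supremum
  have hB : ∀ (u : ℝ≥0) (ω : Ω),
      (⨆ (s : ℝ≥0) (s' : ℝ≥0) (_ : s < s') (_ : s' ≤ u), G ω s s')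
        = max (⨆ n, ⨆ m, ⨆ (_ : d n < d m), ⨆ (_ : d m ≤ u), G ω (d n) (d m))
              (⨆ n, ⨆ (_ : d n < u), G ω (d n) u) := by
    intro u ω
    apply le_antisymm
    · refine iSup_le fun s => iSup_le fun s' => iSup_le fun hss' => iSup_le fun hs'u => ?_
      refine le_of_forall_lt fun c hc => ?_
      rw [hGdef] at hc
      obtain ⟨k, hk⟩ := lt_iSup_iff.mp hc
      set f : ℝ≥0 × ℝ≥0 → ℝ := fun p =>
        h k (X p.2 ω - X p.1 ω) * ((((p.2 : ℝ) - (p.1 : ℝ)) ^ α)⁻¹) with hf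
      have hfc : ∀ p : ℝ≥0 × ℝ≥0, p.1 < p.2 → ContinuousAt f p := by
        intro p hp
        have h1 : Continuous fun p : ℝ≥0 × ℝ≥0 => h k (X p.2 ω - X p.1 ω) :=
          (h k).continuous.comp
            (((hcont ω).comp continuous_snd).sub ((hcont ω).comp continuous_fst))
        have h2 : Continuous fun p : ℝ≥0 × ℝ≥0 => ((p.2 : ℝ) - (p.1 : ℝ)) :=
          (NNReal.continuous_coe.comp continuous_snd).sub
            (NNReal.continuous_coe.comp continuous_fst)
        have h3 : ContinuousAt (fun p : ℝ≥0 × ℝ≥0 => ((p.2 : ℝ) - (p.1 : ℝ)) ^ α) p :=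
          h2.continuousAt.rpow_const (Or.inl (hsubpos hp).ne')
        exact h1.continuousAt.mul
          (h3.inv₀ (ne_of_gt (Real.rpow_pos_of_pos (hsubpos hp) α)))
      have hO : IsOpen {y : ℝ | c < (y : EReal)} :=
        isOpen_lt continuous_const continuous_coe_real_ereal
      rcases eq_or_lt_of_le hs'u with rfl | hs'ltu
      · -- endpoint case s' = u
        have hcone : ContinuousOn (fun x : ℝ≥0 => f (x, s')) (Set.Iio s') := by
          intro x hx
          exact (ContinuousAt.comp (f := fun x : ℝ≥0 => (x, s')) (hfc (x, s') hx)
            (continuousAt_id.prodMk continuousAt_const)).continuousWithinAt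
        have hopen := hcone.isOpen_inter_preimage isOpen_Iio hO
        obtain ⟨n, hn1, hn2⟩ := hdd.exists_mem_open hopen ⟨s, hss', hk⟩
        have hstep : ((f (d n, s') : ℝ) : EReal) ≤ G ω (d n) s' := le_iSup
          (fun k => (((h k (X s' ω - X (d n) ω) *
            ((((s' : ℝ) - ((d n : ℝ≥0) : ℝ)) ^ α)⁻¹ : ℝ)) : ℝ) : EReal)) k
        have h2 : G ω (d n) s' ≤ ⨆ n, ⨆ (_ : d n < s'), G ω (d n) s' :=
          le_iSup₂ (f := fun n (_ : d n < s') => G ω (d n) s') n hn1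
        exact lt_of_lt_of_le hn2 ((hstep.trans h2).trans (le_max_right _ _))
      · -- interior case s' < u
        have hUopen : IsOpen ({p : ℝ≥0 × ℝ≥0 | p.1 < p.2} ∩ {p : ℝ≥0 × ℝ≥0 | p.2 < u}) :=
          (isOpen_lt continuous_fst continuous_snd).inter
            (isOpen_lt continuous_snd continuous_const)
        have hcone : ContinuousOn f ({p : ℝ≥0 × ℝ≥0 | p.1 < p.2} ∩ {p : ℝ≥0 × ℝ≥0 | p.2 < u}) :=
          fun p hp => (hfc p hp.1).continuousWithinAt
        have hopen := hcone.isOpen_inter_preimage hUopen hO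
        obtain ⟨⟨n, m⟩, ⟨hp1, hp2⟩, hp3⟩ :=
          (hdd.prodMap hdd).exists_mem_open hopen ⟨(s, s'), ⟨hss', hs'ltu⟩, hk⟩
        have hstep : ((f (d n, d m) : ℝ) : EReal) ≤ G ω (d n) (d m) := le_iSup
          (fun k => (((h k (X (d m) ω - X (d n) ω) *
            (((((d m : ℝ≥0) : ℝ) - ((d n : ℝ≥0) : ℝ)) ^ α)⁻¹ : ℝ)) : ℝ) : EReal)) k
        have h2 : G ω (d n) (d m) ≤
            ⨆ n, ⨆ m, ⨆ (_ : d n < d m), ⨆ (_ : d m ≤ u), G ω (d n) (d m) :=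
          le_iSup_of_le n (le_iSup_of_le m
            (le_iSup_of_le hp1 (le_iSup_of_le hp2.le le_rfl)))
        exact lt_of_lt_of_le hp3 ((hstep.trans h2).trans (le_max_left _ _))
    · refine max_le ?_ ?_
      · refine iSup_le fun n => iSup_le fun m => iSup_le fun hnm => iSup_le fun hmu => ?_
        exact le_iSup_of_le (d n) (le_iSup_of_le (d m)
          (le_iSup_of_le hnm (le_iSup_of_le hmu le_rfl)))
      · refine iSup_le fun n => iSup_le fun hnu => ?_
        exact le_iSup_of_le (d n) (le_iSup_of_le u
          (le_iSup_of_le hnu (le_iSup_of_le le_rfl le_rfl)))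
  -- measurability
  have measN : Measurable N := by
    have hNe : N = fun x => ⨆ k, ((h k x : ℝ) : EReal) := funext hN
    rw [hNe]
    exact Measurable.iSup fun k => ((h k).continuous.measurable).coe_real_ereal
  have measTermA : ∀ (u v : ℝ≥0), v ≤ u → Measurable[F u] fun ω => N (X v ω) :=
    fun u v hvu => measN.comp ((hadapted v).mono (F.mono hvu) le_rfl)
  have measG : ∀ (u s s' : ℝ≥0), s ≤ u → s' ≤ u → Measurable[F u] fun ω => G ω s s' := by
    intro u s s' hs hs'
    rw [hGdef]
    refine Measurable.iSup fun k => Measurable.coe_real_ereal ?_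
    exact ((h k).continuous.measurable.comp
      (((hadapted s').mono (F.mono hs') le_rfl).sub
        ((hadapted s).mono (F.mono hs) le_rfl))).mul_const _
  have measHol : ∀ u : ℝ≥0, MeasurableSet[F u] {ω | (L : EReal) < Hol u ω} := by
    intro u
    have mA : Measurable[F u] fun ω => ⨆ s ∈ Set.Icc (0 : ℝ≥0) u, N (X s ω) := by
      simp only [hA u]
      refine (measTermA u u le_rfl).max (Measurable.iSup fun n => ?_)
      by_cases hn : d n ≤ u
      · exact Measurable.iSup_Prop _ (measTermA u (d n) hn)
      · simp only [hn, iSup_neg, not_false_iff]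
        exact measurable_const
    have mB : Measurable[F u] fun ω =>
        ⨆ (s : ℝ≥0) (s' : ℝ≥0) (_ : s < s') (_ : s' ≤ u), G ω s s' := by
      simp only [hB u]
      refine Measurable.max (Measurable.iSup fun n => Measurable.iSup fun m => ?_)
        (Measurable.iSup fun n => ?_)
      · by_cases h1 : d n < d m
        · by_cases h2 : d m ≤ u
          · exact Measurable.iSup_Prop _ (Measurable.iSup_Prop _
              (measG u (d n) (d m) (le_trans h1.le h2) h2))
          · simp only [h2, iSup_neg, not_false_iff, iSup_bot]
            exact measurable_const
        · simp only [h1, iSup_neg, not_false_iff]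
          exact measurable_const
      · by_cases h1 : d n < u
        · exact Measurable.iSup_Prop _ (measG u (d n) u h1.le le_rfl)
        · simp only [h1, iSup_neg, not_false_iff]
          exact measurable_const
    have hset : {ω | (L : EReal) < Hol u ω} = ⋃ q : ℚ,
        ({ω | ((q : ℝ) : EReal) < ⨆ s ∈ Set.Icc (0 : ℝ≥0) u, N (X s ω)} ∩
          {ω | ((L - q : ℝ) : EReal) <
            ⨆ (s : ℝ≥0) (s' : ℝ≥0) (_ : s < s') (_ : s' ≤ u), G ω s s'}) := by
      ext ω
      simp only [Set.mem_setOf_eq, Set.mem_iUnion, Set.mem_inter_iff, hHol u ω, hBraw u ω]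
      exact aux_lt_add_iff
    rw [hset]
    exact MeasurableSet.iUnion fun q =>
      (measurableSet_lt measurable_const mA).inter (measurableSet_lt measurable_const mB)
  -- monotonicity of Hol in time
  have holMono : ∀ (ω : Ω) (u v : ℝ≥0), u ≤ v → Hol u ω ≤ Hol v ω := by
    intro ω u v huv
    rw [hHol u ω, hHol v ω]
    refine add_le_add ?_ ?_
    · exact iSup₂_le fun s hs =>
        le_iSup₂ (f := fun s (_ : s ∈ Set.Icc (0 : ℝ≥0) v) => N (X s ω)) s
          ⟨hs.1, hs.2.trans huv⟩
    · exact iSup_le fun s => iSup_le fun s' => iSup_le fun h1 => iSup_le fun h2 =>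
        le_iSup_of_le s (le_iSup_of_le s' (le_iSup_of_le h1
          (le_iSup_of_le (h2.trans huv) le_rfl)))
  -- the stopping time property
  intro t
  rw [MeasurableSpace.measurableSet_iInf]
  intro s
  rw [MeasurableSpace.measurableSet_iInf]
  intro hs
  have hts : t < s := hs
  set v : ℕ → ℝ≥0 := fun n => t + (s - t) / ((n : ℝ≥0) + 1) with hv
  have hstpos : 0 < s - t := tsub_pos_of_lt hts
  have hvlt : ∀ n, t < v n := by
    intro n
    have : 0 < (s - t) / ((n : ℝ≥0) + 1) := div_pos hstpos (by positivity)
    exact lt_add_of_pos_right t this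
  have hvle : ∀ n, v n ≤ s := by
    intro n
    have h1 : (s - t) / ((n : ℝ≥0) + 1) ≤ s - t :=
      div_le_self (zero_le) le_add_self
    calc t + (s - t) / ((n : ℝ≥0) + 1) ≤ t + (s - t) := add_le_add_right h1 t
      _ = s := add_tsub_cancel_of_le hts.le
  have hsetEq : {ω : Ω | τ ω ≤ (t : ℝ≥0∞)} =
      ⋂ n, {ω | (L : EReal) < Hol (v n) ω} := by
    ext ω
    simp only [Set.mem_setOf_eq, Set.mem_iInter]
    constructor
    · intro hτt n
      have h1 : (⨅ u ∈ {u : ℝ≥0 | (L : EReal) < Hol u ω}, (u : ℝ≥0∞)) < ((v n : ℝ≥0) : ℝ≥0∞) := by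
        rw [← hτ ω]
        exact lt_of_le_of_lt hτt (ENNReal.coe_lt_coe.2 (hvlt n))
      obtain ⟨u', hlt⟩ := iInf_lt_iff.mp h1
      obtain ⟨hu', hlt⟩ := iInf_lt_iff.mp hlt
      exact lt_of_lt_of_le hu' (holMono ω u' (v n) (ENNReal.coe_lt_coe.1 hlt).le)
    · intro hall
      refine ENNReal.le_of_forall_pos_le_add fun ε hε _ => ?_
      obtain ⟨n, hn⟩ := exists_nat_gt ((s - t) / ε)
      have hεne : ε ≠ 0 := hε.ne'
      have hle : (s - t) / ((n : ℝ≥0) + 1) ≤ ε := by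
        rw [div_le_iff₀ (by positivity : (0 : ℝ≥0) < (n : ℝ≥0) + 1)]
        have h2 : s - t < (n : ℝ≥0) * ε := by
          rwa [div_lt_iff₀ hε] at hn
        calc s - t ≤ (n : ℝ≥0) * ε := h2.le
          _ ≤ ((n : ℝ≥0) + 1) * ε :=
              mul_le_mul_of_nonneg_right (le_add_of_nonneg_right zero_le_one) (zero_le)
          _ = ε * ((n : ℝ≥0) + 1) := mul_comm _ _
      calc τ ω ≤ ((v n : ℝ≥0) : ℝ≥0∞) := by
            rw [hτ ω]
            exact iInf₂_le (v n) (hall n)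
        _ ≤ ((t + ε : ℝ≥0) : ℝ≥0∞) := ENNReal.coe_le_coe.2 (add_le_add_right hle t)
        _ = (t : ℝ≥0∞) + (ε : ℝ≥0∞) := ENNReal.coe_add t ε
  rw [hsetEq]
  exact MeasurableSet.iInter fun n => F.mono (hvle n) _ (measHol (v n))
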